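/- arXiv:2310.02604 — 2 statements merged into one kernel-verified Lean document; each statement's English description precedes it below -/
import Mathlib

section
/- Let A ∈ ℝ^{n×m} and let α, γ > 0. Then for every x ∈ ℝⁿ and y ∈ ℝᵐ, writing X = (x, y) ∈ ℝ^{n+m}, one has ‖Aᵀ x‖₂ + ‖A y‖₂ ≤ (2(1 + γ‖A‖₂)/α) · ‖(M_EG(A) − I) X‖₂. In particular, if along a trajectory ‖(M_EG(A_i) − I) X_t‖₂ converges to 0 at rate O(g(t)), then Δ_{i,t} = ‖A_iᵀ x_t‖₂ + ‖A_i y_t‖₂ converges to 0 at rate O(g(t)). -/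
open Matrix

/-- Euclidean norm of a real vector. -/
noncomputable def vnorm2 {ι : Type*} [Fintype ι] (v : ι → ℝ) : ℝ :=
  Real.sqrt (∑ i, v i ^ 2)

/-- Spectral (operator 2-)norm of a real matrix; this is also its largest singular value. -/
noncomputable def mnorm2 {ι κ : Type*} [Fintype ι] [Fintype κ] [DecidableEq κ]
    (M : Matrix ι κ ℝ) : ℝ :=
  ‖LinearMap.toContinuousLinearMap (Matrix.toEuclideanLin M)‖

/-- The extra-gradient (EG) iterative matrix
`M_EG(A) = [[I − αγ A Aᵀ, −α A], [α Aᵀ, I − αγ Aᵀ A]]`. -/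
noncomputable def MEG {n m : ℕ} (α γ : ℝ) (A : Matrix (Fin n) (Fin m) ℝ) :
    Matrix (Fin n ⊕ Fin m) (Fin n ⊕ Fin m) ℝ :=
  fromBlocks (1 - (α * γ) • (A * Aᵀ)) ((-α) • A) (α • Aᵀ) (1 - (α * γ) • (Aᵀ * A))

section Helpers

variable {ι κ : Type*} [Fintype ι] [Fintype κ]

lemma vnorm2_eq (v : ι → ℝ) : vnorm2 v = ‖(WithLp.equiv 2 (ι → ℝ)).symm v‖ := by
  rw [vnorm2, EuclideanSpace.norm_eq]
  congr 1
  refine Finset.sum_congr rfl fun i _ => ?_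
  rw [Real.norm_eq_abs, sq_abs]
  rfl

lemma vnorm2_nonneg (v : ι → ℝ) : 0 ≤ vnorm2 v := Real.sqrt_nonneg _

lemma vnorm2_sq (v : ι → ℝ) : vnorm2 v ^ 2 = v ⬝ᵥ v := by
  rw [vnorm2, Real.sq_sqrt (by positivity)]
  simp [dotProduct, sq]

lemma vnorm2_smul (c : ℝ) (v : ι → ℝ) : vnorm2 (c • v) = |c| * vnorm2 v := by
  simp only [vnorm2, Pi.smul_apply, smul_eq_mul, mul_pow, ← Finset.mul_sum]
  rw [Real.sqrt_mul (sq_nonneg c), Real.sqrt_sq_eq_abs]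

lemma vnorm2_neg (v : ι → ℝ) : vnorm2 (-v) = vnorm2 v := by
  simp [vnorm2]

lemma inner_ev (a b : ι → ℝ) :
    (inner ℝ ((WithLp.equiv 2 (ι → ℝ)).symm a) ((WithLp.equiv 2 (ι → ℝ)).symm b) : ℝ) = a ⬝ᵥ b := by
  simp only [PiLp.inner_apply, RCLike.inner_apply, starRingEnd_apply, star_trivial]
  simp only [dotProduct, mul_comm]
  rfl

lemma dot_le_vnorm2 (a b : ι → ℝ) : a ⬝ᵥ b ≤ vnorm2 a * vnorm2 b := by
  rw [vnorm2_eq, vnorm2_eq, ← inner_ev]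
  exact real_inner_le_norm _ _

lemma vnorm2_mulVec_le [DecidableEq κ] (A : Matrix ι κ ℝ) (v : κ → ℝ) :
    vnorm2 (A.mulVec v) ≤ mnorm2 A * vnorm2 v := by
  rw [vnorm2_eq, vnorm2_eq, mnorm2]
  have h := (LinearMap.toContinuousLinearMap (Matrix.toEuclideanLin A)).le_opNorm
    ((WithLp.equiv 2 (κ → ℝ)).symm v)
  simpa using h

lemma mnorm2_nonneg [DecidableEq κ] (A : Matrix ι κ ℝ) : 0 ≤ mnorm2 A := norm_nonneg _

lemma vnorm2_transpose_mulVec_le [DecidableEq ι] [DecidableEq κ] (A : Matrix ι κ ℝ) (w : ι → ℝ) :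
    vnorm2 (Aᵀ.mulVec w) ≤ mnorm2 A * vnorm2 w := by
  rcases eq_or_lt_of_le (vnorm2_nonneg (Aᵀ.mulVec w)) with h | h
  · rw [← h]; exact mul_nonneg (mnorm2_nonneg A) (vnorm2_nonneg w)
  · have key : vnorm2 (Aᵀ.mulVec w) ^ 2 ≤ (mnorm2 A * vnorm2 w) * vnorm2 (Aᵀ.mulVec w) := by
      rw [vnorm2_sq]
      have h1 : (Aᵀ.mulVec w) ⬝ᵥ (Aᵀ.mulVec w) = (A.mulVec (Aᵀ.mulVec w)) ⬝ᵥ w := by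
        rw [Matrix.dotProduct_mulVec, Matrix.vecMul_transpose]
      calc (Aᵀ.mulVec w) ⬝ᵥ (Aᵀ.mulVec w) = (A.mulVec (Aᵀ.mulVec w)) ⬝ᵥ w := h1
        _ ≤ vnorm2 (A.mulVec (Aᵀ.mulVec w)) * vnorm2 w := dot_le_vnorm2 _ _
        _ ≤ (mnorm2 A * vnorm2 (Aᵀ.mulVec w)) * vnorm2 w := by
            exact mul_le_mul_of_nonneg_right (vnorm2_mulVec_le A _) (vnorm2_nonneg w)
        _ = (mnorm2 A * vnorm2 w) * vnorm2 (Aᵀ.mulVec w) := by ring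
    nlinarith [key]

lemma vnorm2_sumElim_left (a : ι → ℝ) (b : κ → ℝ) : vnorm2 a ≤ vnorm2 (Sum.elim a b) := by
  rw [vnorm2, vnorm2]
  apply Real.sqrt_le_sqrt
  rw [Fintype.sum_sum_type]
  simp only [Sum.elim_inl, Sum.elim_inr]
  have : (0 : ℝ) ≤ ∑ i, b i ^ 2 := by positivity
  linarith

lemma vnorm2_sumElim_right (a : ι → ℝ) (b : κ → ℝ) : vnorm2 b ≤ vnorm2 (Sum.elim a b) := by
  rw [vnorm2, vnorm2]
  apply Real.sqrt_le_sqrt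
  rw [Fintype.sum_sum_type]
  simp only [Sum.elim_inl, Sum.elim_inr]
  have : (0 : ℝ) ≤ ∑ i, a i ^ 2 := by positivity
  linarith

end Helpers

/-- For every `x, y`, writing `X = (x, y)`,
`‖Aᵀ x‖₂ + ‖A y‖₂ ≤ (2(1 + γ‖A‖₂)/α)·‖(M_EG(A) − I) X‖₂`; in particular if
`‖(M_EG(A_i) − I) X_t‖₂ → 0` at rate `O(g(t))` along a trajectory, then
`Δ_{i,t} = ‖A_iᵀ x_t‖₂ + ‖A_i y_t‖₂ → 0` at rate `O(g(t))`. -/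
theorem stmt13 {n m : ℕ} (A : Matrix (Fin n) (Fin m) ℝ) (α γ : ℝ) (hα : 0 < α) (hγ : 0 < γ) :
    (∀ (x : Fin n → ℝ) (y : Fin m → ℝ),
      vnorm2 (Aᵀ.mulVec x) + vnorm2 (A.mulVec y) ≤
        (2 * (1 + γ * mnorm2 A) / α) *
          vnorm2 ((MEG α γ A - 1).mulVec (Sum.elim x y))) ∧
    (∀ (X : ℕ → ((Fin n ⊕ Fin m) → ℝ)) (g : ℕ → ℝ) (c : ℝ),
      (∀ t, vnorm2 ((MEG α γ A - 1).mulVec (X t)) ≤ c * g t) →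
      ∃ c' : ℝ, ∀ t,
        vnorm2 (Aᵀ.mulVec fun j => X t (Sum.inl j)) +
          vnorm2 (A.mulVec fun j => X t (Sum.inr j)) ≤ c' * g t) := by
  have hA : 0 ≤ mnorm2 A := mnorm2_nonneg A
  have key : ∀ (x : Fin n → ℝ) (y : Fin m → ℝ),
      vnorm2 (Aᵀ.mulVec x) + vnorm2 (A.mulVec y) ≤
        (2 * (1 + γ * mnorm2 A) / α) * vnorm2 ((MEG α γ A - 1).mulVec (Sum.elim x y)) := by
    intro x y
    set u := Aᵀ.mulVec x with hu
    set v := A.mulVec y with hv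
    set s := γ • (A.mulVec u) + v with hs
    set t := u - γ • (Aᵀ.mulVec v) with ht
    have hr : (MEG α γ A - 1).mulVec (Sum.elim x y) = Sum.elim ((-α) • s) (α • t) := by
      rw [Matrix.sub_mulVec, Matrix.one_mulVec, MEG, fromBlocks_mulVec]
      funext i
      cases i with
      | inl i =>
        simp only [Pi.sub_apply, Sum.elim_inl, Sum.elim_inr, Function.comp_apply,
          Matrix.sub_mulVec, Matrix.one_mulVec, Matrix.smul_mulVec,
          ← Matrix.mulVec_mulVec, hs, hu, hv, Pi.add_apply, Pi.smul_apply,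
          Sum.elim_comp_inl, Sum.elim_comp_inr, smul_eq_mul, Pi.neg_apply]
        ring
      | inr i =>
        simp only [Pi.sub_apply, Sum.elim_inl, Sum.elim_inr, Function.comp_apply,
          Matrix.sub_mulVec, Matrix.one_mulVec, Matrix.smul_mulVec,
          ← Matrix.mulVec_mulVec, ht, hu, hv, Pi.add_apply, Pi.smul_apply,
          Sum.elim_comp_inl, Sum.elim_comp_inr, smul_eq_mul, Pi.neg_apply]
        ring
    set R := vnorm2 ((MEG α γ A - 1).mulVec (Sum.elim x y)) with hR
    have h1 : α * vnorm2 s ≤ R := by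
      have h := vnorm2_sumElim_left ((-α) • s) (α • t)
      rw [vnorm2_smul, abs_neg, abs_of_pos hα] at h
      rw [hR, hr]
      exact h
    have h2 : α * vnorm2 t ≤ R := by
      have h := vnorm2_sumElim_right ((-α) • s) (α • t)
      rw [vnorm2_smul, abs_of_pos hα] at h
      rw [hR, hr]
      exact h
    have claim1 : vnorm2 u ≤ vnorm2 t + γ * mnorm2 A * vnorm2 s := by
      rcases eq_or_lt_of_le (vnorm2_nonneg u) with h | h
      · rw [← h]
        have := mul_nonneg (mul_nonneg hγ.le hA) (vnorm2_nonneg s)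
        linarith [vnorm2_nonneg t]
      · have hd : u ⬝ᵥ (Aᵀ.mulVec v) = (A.mulVec u) ⬝ᵥ v := by
          rw [Matrix.dotProduct_mulVec, Matrix.vecMul_transpose]
        have e1 : u ⬝ᵥ u + γ^2 * ((A.mulVec u) ⬝ᵥ (A.mulVec u))
            = u ⬝ᵥ t + γ * ((A.mulVec u) ⬝ᵥ s) := by
          rw [ht, hs]
          simp only [dotProduct_sub, dotProduct_add, dotProduct_smul, smul_eq_mul]
          linear_combination γ * hd
        have hAu : (A.mulVec u) ⬝ᵥ s ≤ mnorm2 A * vnorm2 u * vnorm2 s :=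
          le_trans (dot_le_vnorm2 _ _)
            (mul_le_mul_of_nonneg_right (vnorm2_mulVec_le A u) (vnorm2_nonneg s))
        have hut : u ⬝ᵥ t ≤ vnorm2 u * vnorm2 t := dot_le_vnorm2 _ _
        have hAuAu : 0 ≤ (A.mulVec u) ⬝ᵥ (A.mulVec u) := by
          rw [← vnorm2_sq]; positivity
        have e2 : vnorm2 u ^ 2 ≤ vnorm2 u * (vnorm2 t + γ * mnorm2 A * vnorm2 s) := by
          rw [vnorm2_sq]
          have k1 := mul_le_mul_of_nonneg_left hAu hγ.le
          have k2 := mul_nonneg (sq_nonneg γ) hAuAu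
          nlinarith [e1, hut, k1, k2]
        nlinarith [e2, h]
    have claim2 : vnorm2 v ≤ vnorm2 s + γ * mnorm2 A * vnorm2 t := by
      rcases eq_or_lt_of_le (vnorm2_nonneg v) with h | h
      · rw [← h]
        have := mul_nonneg (mul_nonneg hγ.le hA) (vnorm2_nonneg t)
        linarith [vnorm2_nonneg s]
      · have hd : v ⬝ᵥ (A.mulVec u) = (Aᵀ.mulVec v) ⬝ᵥ u := by
          rw [Matrix.dotProduct_mulVec, ← Matrix.mulVec_transpose]
        have e1 : v ⬝ᵥ v + γ^2 * ((Aᵀ.mulVec v) ⬝ᵥ (Aᵀ.mulVec v))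
            = v ⬝ᵥ s - γ * ((Aᵀ.mulVec v) ⬝ᵥ t) := by
          rw [hs, ht]
          simp only [dotProduct_sub, dotProduct_add, dotProduct_smul, smul_eq_mul]
          linear_combination (-γ) * hd
        have hAv : (Aᵀ.mulVec v) ⬝ᵥ (-t) ≤ mnorm2 A * vnorm2 v * vnorm2 t := by
          have h' := dot_le_vnorm2 (Aᵀ.mulVec v) (-t)
          rw [vnorm2_neg] at h'
          exact le_trans h'
            (mul_le_mul_of_nonneg_right (vnorm2_transpose_mulVec_le A v) (vnorm2_nonneg t))
        rw [dotProduct_neg] at hAv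
        have hvs : v ⬝ᵥ s ≤ vnorm2 v * vnorm2 s := dot_le_vnorm2 _ _
        have hAvAv : 0 ≤ (Aᵀ.mulVec v) ⬝ᵥ (Aᵀ.mulVec v) := by
          rw [← vnorm2_sq]; positivity
        have e2 : vnorm2 v ^ 2 ≤ vnorm2 v * (vnorm2 s + γ * mnorm2 A * vnorm2 t) := by
          rw [vnorm2_sq]
          have k1 := mul_le_mul_of_nonneg_left hAv hγ.le
          have k2 := mul_nonneg (sq_nonneg γ) hAvAv
          nlinarith [e1, hvs, k1, k2]
        nlinarith [e2, h]
    have hst : vnorm2 s + vnorm2 t ≤ 2 * R / α := by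
      rw [le_div_iff₀ hα]
      linarith
    calc vnorm2 u + vnorm2 v ≤ (1 + γ * mnorm2 A) * (vnorm2 s + vnorm2 t) := by nlinarith
      _ ≤ (1 + γ * mnorm2 A) * (2 * R / α) := by
          apply mul_le_mul_of_nonneg_left hst
          positivity
      _ = (2 * (1 + γ * mnorm2 A) / α) * R := by ring
  refine ⟨key, fun X g c hX => ?_⟩
  refine ⟨(2 * (1 + γ * mnorm2 A) / α) * c, fun t => ?_⟩
  have hXt : Sum.elim (fun j => X t (Sum.inl j)) (fun j => X t (Sum.inr j)) = X t := by
    funext i; cases i <;> rfl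
  have h := key (fun j => X t (Sum.inl j)) (fun j => X t (Sum.inr j))
  rw [hXt] at h
  have hK : 0 ≤ 2 * (1 + γ * mnorm2 A) / α := by positivity
  calc vnorm2 (Aᵀ.mulVec fun j => X t (Sum.inl j)) +
        vnorm2 (A.mulVec fun j => X t (Sum.inr j))
      ≤ (2 * (1 + γ * mnorm2 A) / α) * vnorm2 ((MEG α γ A - 1).mulVec (X t)) := h
    _ ≤ (2 * (1 + γ * mnorm2 A) / α) * (c * g t) := mul_le_mul_of_nonneg_left (hX t) hK
    _ = ((2 * (1 + γ * mnorm2 A) / α) * c) * g t := by ring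
end

section
/- Let A₁ = [1, −1] and A₂ = [−1, 1] be 1×2 payoff matrices (so n = 1, m = 2), and consider the 6×6 negative-momentum iterative matrices M_NM(A₂, A₁) and M_NM(A₁, A₂). For every step size η > 0 and all momentum parameters β₁ ≤ 0, β₂ ≤ 0, the spectral radius of the one-period product M_NM(A₁, A₂)·M_NM(A₂, A₁) is strictly greater than 1. -/
open Matrix

/-- The negative-momentum (NM) iterative matrix
`M_NM(A', A) = [[(1+β₁)I, −ηA, −β₁I, 0], [η(1+β₁)A'ᵀ, (1+β₂)I − η²A'ᵀA, −ηβ₁A'ᵀ, −β₂I],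
[I, 0, 0, 0], [0, I, 0, 0]]`. -/
noncomputable def MNM {n m : ℕ} (η β₁ β₂ : ℝ) (A' A : Matrix (Fin n) (Fin m) ℝ) :
    Matrix ((Fin n ⊕ Fin m) ⊕ (Fin n ⊕ Fin m)) ((Fin n ⊕ Fin m) ⊕ (Fin n ⊕ Fin m)) ℝ :=
  fromBlocks
    (fromBlocks ((1 + β₁) • 1) ((-η) • A)
      ((η * (1 + β₁)) • A'ᵀ) ((1 + β₂) • 1 - (η ^ 2) • (A'ᵀ * A)))
    (fromBlocks ((-β₁) • 1) 0 ((-(η * β₁)) • A'ᵀ) ((-β₂) • 1))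
    1 0

/-- `μ : ℂ` is an eigenvalue of the real matrix `M`. -/
def IsEig {d : Type*} [Fintype d] (M : Matrix d d ℝ) (μ : ℂ) : Prop :=
  ∃ v : d → ℂ, v ≠ 0 ∧ (M.map (fun x : ℝ => (x : ℂ))).mulVec v = μ • v

/-- `A₁ = [1, −1]`. -/
noncomputable def A1 : Matrix (Fin 1) (Fin 2) ℝ := !![1, -1]

/-- `A₂ = [−1, 1]`. -/
noncomputable def A2 : Matrix (Fin 1) (Fin 2) ℝ := !![-1, 1]

/-! ### Auxiliary definitions: the restriction to the antisymmetric invariant subspace -/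

/-- Restriction of `MNM η β₁ β₂ A2 A1` to the invariant subspace
`{(x, s·(1,-1), x', s'·(1,-1))}` in coordinates `(x, s, x', s')`. -/
noncomputable def N1 (η β₁ β₂ : ℝ) : Matrix (Fin 4) (Fin 4) ℝ :=
  !![1+β₁, -(2*η), -β₁, 0;
     -(η*(1+β₁)), 1+β₂+2*η^2, η*β₁, -β₂;
     1, 0, 0, 0;
     0, 1, 0, 0]

/-- Restriction of `MNM η β₁ β₂ A1 A2` to the same subspace. -/
noncomputable def N2 (η β₁ β₂ : ℝ) : Matrix (Fin 4) (Fin 4) ℝ :=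
  !![1+β₁, 2*η, -β₁, 0;
     η*(1+β₁), 1+β₂+2*η^2, -(η*β₁), -β₂;
     1, 0, 0, 0;
     0, 1, 0, 0]

/-- Explicit form of `N2 * N1 - t • 1`. -/
noncomputable def D (η β₁ β₂ t : ℝ) : Matrix (Fin 4) (Fin 4) ℝ :=
  !![1 + (-1)*t + β₁ + β₁^2 + (-2)*η^2 + (-2)*η^2*β₁, 2*η*β₂ + (-2)*η*β₁ + 4*η^3, (-1)*β₁ + (-1)*β₁^2 + 2*η^2*β₁, (-2)*η*β₂;
     (-1)*η*β₂ + (-1)*η*β₁*β₂ + η*β₁^2 + (-2)*η^3 + (-2)*η^3*β₁, 1 + (-1)*t + β₂ + β₂^2 + 2*η^2 + 4*η^2*β₂ + (-2)*η^2*β₁ + 4*η^4, η*β₁*β₂ + (-1)*η*β₁^2 + 2*η^3*β₁, (-1)*β₂ + (-1)*β₂^2 + (-2)*η^2*β₂;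
     1 + β₁, (-2)*η, (-1)*t + (-1)*β₁, 0;
     (-1)*η + (-1)*η*β₁, 1 + β₂ + 2*η^2, η*β₁, (-1)*t + (-1)*β₂]

lemma D_eq (η β₁ β₂ t : ℝ) : D η β₁ β₂ t = N2 η β₁ β₂ * N1 η β₁ β₂ - t • 1 := by
  ext i j
  fin_cases i <;> fin_cases j <;>
    simp [D, N1, N2, Matrix.mul_apply, Fin.sum_univ_succ, Matrix.one_apply] <;> ring

lemma det_fin_four {R : Type*} [CommRing R]
    (a b c d e f g h i j k l m n o p : R) :
    (!![a,b,c,d; e,f,g,h; i,j,k,l; m,n,o,p]).det =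
      a*(f*(k*p - l*o) - g*(j*p - l*n) + h*(j*o - k*n))
      - b*(e*(k*p - l*o) - g*(i*p - l*m) + h*(i*o - k*m))
      + c*(e*(j*p - l*n) - f*(i*p - l*m) + h*(i*n - j*m))
      - d*(e*(j*o - k*n) - f*(i*o - k*m) + g*(i*n - j*m)) := by
  simp [Matrix.det_succ_row_zero, Fin.sum_univ_succ, Fin.succAbove,
    Fin.castSucc, Fin.castAdd, Fin.castLE, Matrix.det_fin_three]
  ring

lemma det_D (η β₁ β₂ t : ℝ) :
    (D η β₁ β₂ t).det =
      (t-1)^2 * (t-β₁^2) * (t-β₂^2) + 4*η^2*(β₂-β₁)*t^2*(1-t) - 4*η^4*t^3 := by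
  rw [D, det_fin_four]; ring

open Polynomial Filter in
/-- The characteristic polynomial of `N2 * N1` has a real root `> 1`. -/
lemma exists_root (η β₁ β₂ : ℝ) (hη : 0 < η) :
    ∃ t : ℝ, 1 < t ∧ (N2 η β₁ β₂ * N1 η β₁ β₂ - t • 1).det = 0 := by
  set pQ : Polynomial ℝ :=
    X^4 + C (-2 - β₁^2 - β₂^2 - 4*η^2*β₂ + 4*η^2*β₁ - 4*η^4) * X^3
      + C (1 + 2*β₁^2 + 2*β₂^2 + β₁^2*β₂^2 + 4*η^2*β₂ - 4*η^2*β₁) * X^2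
      + C (-β₁^2 - β₂^2 - 2*β₁^2*β₂^2) * X + C (β₁^2*β₂^2) with hpQ
  have pQ_monic : pQ.Monic := by rw [hpQ]; monicity!
  have pQ_deg : pQ.degree = 4 := by rw [hpQ]; compute_degree!
  have pQ_eval : ∀ t : ℝ, pQ.eval t =
      (t-1)^2 * (t-β₁^2) * (t-β₂^2) + 4*η^2*(β₂-β₁)*t^2*(1-t) - 4*η^4*t^3 := by
    intro t; simp [hpQ]; ring
  have h1 : pQ.eval 1 < 0 := by
    rw [pQ_eval]
    have : (0:ℝ) < 4*η^4 := by positivity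
    nlinarith
  have htop : Tendsto (fun x => pQ.eval x) atTop atTop :=
    Polynomial.tendsto_atTop_of_leadingCoeff_nonneg _
      (by rw [pQ_deg]; norm_num) (by rw [pQ_monic.leadingCoeff]; norm_num)
  obtain ⟨T, hT1, hTpos⟩ := ((eventually_gt_atTop 1).and (htop.eventually_ge_atTop 0)).exists
  have hsub := intermediate_value_Icc hT1.le (Polynomial.continuous pQ).continuousOn
  have h0 : (0:ℝ) ∈ Set.Icc (pQ.eval 1) (pQ.eval T) := ⟨h1.le, hTpos⟩
  obtain ⟨t, ht, hroot⟩ := hsub h0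
  have hroot' : pQ.eval t = 0 := hroot
  refine ⟨t, lt_of_le_of_ne ht.1 ?_, ?_⟩
  · rintro rfl; exact h1.ne hroot'
  · rw [← D_eq, det_D, ← pQ_eval, hroot']

/-- Embedding of the coordinates `(x, s, x', s')` back into `ℂ⁶`. -/
def emb (w : Fin 4 → ℂ) : ((Fin 1 ⊕ Fin 2) ⊕ (Fin 1 ⊕ Fin 2)) → ℂ :=
  Sum.elim (Sum.elim (fun _ => w 0) ![w 1, -(w 1)])
    (Sum.elim (fun _ => w 2) ![w 3, -(w 3)])

lemma intertwine1 (η β₁ β₂ : ℝ) (w : Fin 4 → ℂ) :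
    ((MNM η β₁ β₂ A2 A1).map (fun x : ℝ => (x : ℂ))) *ᵥ emb w
      = emb (((N1 η β₁ β₂).map (fun x : ℝ => (x : ℂ))) *ᵥ w) := by
  funext i
  rcases i with (i | i) | (i | i) <;> fin_cases i <;>
    simp [MNM, A1, A2, N1, emb, Matrix.mulVec, dotProduct,
      Fintype.sum_sum_type, Fin.sum_univ_succ, Matrix.mul_apply,
      Matrix.one_apply, show (Fin.succ 2 : Fin 4) = 3 from rfl] <;> ring

lemma intertwine2 (η β₁ β₂ : ℝ) (w : Fin 4 → ℂ) :
    ((MNM η β₁ β₂ A1 A2).map (fun x : ℝ => (x : ℂ))) *ᵥ emb w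
      = emb (((N2 η β₁ β₂).map (fun x : ℝ => (x : ℂ))) *ᵥ w) := by
  funext i
  rcases i with (i | i) | (i | i) <;> fin_cases i <;>
    simp [MNM, A1, A2, N2, emb, Matrix.mulVec, dotProduct,
      Fintype.sum_sum_type, Fin.sum_univ_succ, Matrix.mul_apply,
      Matrix.one_apply, show (Fin.succ 2 : Fin 4) = 3 from rfl] <;> ring

lemma emb_smul (μ : ℂ) (w : Fin 4 → ℂ) : emb (μ • w) = μ • emb w := by
  funext i
  rcases i with (i | i) | (i | i) <;> fin_cases i <;> simp [emb] <;> ring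

lemma emb_ne_zero {w : Fin 4 → ℂ} (hw : w ≠ 0) : emb w ≠ 0 := by
  intro h
  apply hw
  funext j
  fin_cases j
  · exact congrFun h (Sum.inl (Sum.inl 0))
  · exact congrFun h (Sum.inl (Sum.inr 0))
  · exact congrFun h (Sum.inr (Sum.inl 0))
  · exact congrFun h (Sum.inr (Sum.inr 0))

/-- For every step size `η > 0` and momentum parameters `β₁ ≤ 0`, `β₂ ≤ 0`, the one-period
product `M_NM(A₁, A₂)·M_NM(A₂, A₁)` of the negative-momentum iterative matrices for the
period-2 game `A₁ = [1,−1]`, `A₂ = [−1,1]` has spectral radius strictly greater than `1`,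
i.e. it has a complex eigenvalue of modulus `> 1`. -/
theorem stmt14 (η β₁ β₂ : ℝ) (hη : 0 < η) (hβ₁ : β₁ ≤ 0) (hβ₂ : β₂ ≤ 0) :
    ∃ μ : ℂ, IsEig (MNM η β₁ β₂ A1 A2 * MNM η β₁ β₂ A2 A1) μ ∧ 1 < ‖μ‖ := by
  obtain ⟨t, ht, hdet⟩ := exists_root η β₁ β₂ hη
  -- The complex 4×4 matrix `N2*N1 - t•1` is singular
  have hmap : ((N2 η β₁ β₂ * N1 η β₁ β₂ - t • 1).map (fun x : ℝ => (x : ℂ)))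
      = (N2 η β₁ β₂ * N1 η β₁ β₂).map (fun x : ℝ => (x : ℂ)) - (t : ℂ) • 1 := by
    ext i j
    by_cases hij : i = j <;>
      simp [Matrix.map_apply, Matrix.sub_apply, Matrix.smul_apply, Matrix.one_apply, hij]
  have hdetC : ((N2 η β₁ β₂ * N1 η β₁ β₂).map (fun x : ℝ => (x : ℂ))
      - (t : ℂ) • 1).det = 0 := by
    rw [← hmap]
    have := (Complex.ofRealHom.map_det (N2 η β₁ β₂ * N1 η β₁ β₂ - t • 1)).symm
    simp only [RingHom.mapMatrix_apply] at this
    rw [show ((N2 η β₁ β₂ * N1 η β₁ β₂ - t • 1).map (fun x : ℝ => (x : ℂ)))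
        = (N2 η β₁ β₂ * N1 η β₁ β₂ - t • 1).map Complex.ofRealHom from rfl, this, hdet]
    simp
  obtain ⟨w, hw0, hww⟩ := (Matrix.exists_mulVec_eq_zero_iff).mpr hdetC
  -- `w` is an eigenvector of the complex 4×4 product with eigenvalue `t`
  have heig4 : ((N2 η β₁ β₂ * N1 η β₁ β₂).map (fun x : ℝ => (x : ℂ))) *ᵥ w
      = (t : ℂ) • w := by
    have := hww
    rw [Matrix.sub_mulVec, Matrix.smul_mulVec, Matrix.one_mulVec, sub_eq_zero] at this
    exact this
  refine ⟨(t : ℂ), ⟨emb w, emb_ne_zero hw0, ?_⟩, ?_⟩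
  · have hm : (MNM η β₁ β₂ A1 A2 * MNM η β₁ β₂ A2 A1).map (fun x : ℝ => (x : ℂ))
        = (MNM η β₁ β₂ A1 A2).map (fun x : ℝ => (x : ℂ))
          * (MNM η β₁ β₂ A2 A1).map (fun x : ℝ => (x : ℂ)) :=
      Matrix.map_mul (f := Complex.ofRealHom)
    have hn : ((N2 η β₁ β₂ * N1 η β₁ β₂).map (fun x : ℝ => (x : ℂ)))
        = (N2 η β₁ β₂).map (fun x : ℝ => (x : ℂ)) * (N1 η β₁ β₂).map (fun x : ℝ => (x : ℂ)) :=
      Matrix.map_mul (f := Complex.ofRealHom)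
    rw [hm, ← Matrix.mulVec_mulVec, intertwine1, intertwine2, ← emb_smul, ← heig4, hn,
      Matrix.mulVec_mulVec]
  · rw [Complex.norm_real, Real.norm_eq_abs, abs_of_pos (lt_trans one_pos ht)]
    exact ht
end
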